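/- Let G be a finite abelian group, identified with ℤ_{n₁} × ... × ℤ_{n_m}, and let p, q be probability distributions on G with Fourier transforms λ_a(p) = ∑_k p_k e^{2πi a·k} (a·k = ∑_j a_j k_j / n_j). Suppose λ_a(q) = 0 implies λ_a(p) = 0, and suppose that for all a ∉ {0} ∪ {a : λ_a(q) = 0}, |λ_a(p)| / |λ_a(q)|^r < 1. Then for all sufficiently large N, the function w: G → ℝ defined by w_k = (1/|G|) ∑_{a: λ_a(q) ≠ 0} (λ_a(p)^N / λ_a(q)^{⌊rN⌋}) e^{2πi a·k} is real and nonnegative for all k, and ∑_k w_k = 1. -/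

import Mathlib

open scoped ComplexOrder Real

namespace Stmt9Aux

noncomputable def psi (m : ℕ) (n : Fin m → ℕ) (a k : ∀ j, ZMod (n j)) : ℂ :=
  Complex.exp (2 * π * Complex.I * ∑ j, ((a j).val * (k j).val : ℂ) / (n j : ℂ))

variable (m : ℕ) (n : Fin m → ℕ) [∀ j, NeZero (n j)]

lemma psi_zero (k : ∀ j, ZMod (n j)) : psi m n 0 k = 1 := by
  simp [psi]

lemma psi_norm (a k : ∀ j, ZMod (n j)) : ‖psi m n a k‖ = 1 := by
  have : (∑ j, ((a j).val * (k j).val : ℂ) / (n j : ℂ))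
      = ((∑ j, ((a j).val * (k j).val : ℝ) / (n j : ℝ) : ℝ) : ℂ) := by
    push_cast; ring
  rw [psi, this]
  have h2 : 2 * (π:ℂ) * Complex.I * ((∑ j, ((a j).val * (k j).val : ℝ) / (n j : ℝ) : ℝ) : ℂ)
      = ((2 * π * (∑ j, ((a j).val * (k j).val : ℝ) / (n j : ℝ)) : ℝ) : ℂ) * Complex.I := by
    push_cast; ring
  rw [h2, Complex.norm_exp_ofReal_mul_I]

lemma psi_mul_neg (a k : ∀ j, ZMod (n j)) : psi m n (-a) k * psi m n a k = 1 := by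
  rw [psi, psi, ← Complex.exp_add, ← mul_add, ← Finset.sum_add_distrib]
  have key : (∑ j, ((((-a) j).val * (k j).val : ℂ) / (n j : ℂ)
        + ((a j).val * (k j).val : ℂ) / (n j : ℂ)))
      = ((∑ j, if a j = 0 then 0 else (k j).val : ℕ) : ℂ) := by
    push_cast
    refine Finset.sum_congr rfl fun j _ => ?_
    have hn : ((n j : ℂ)) ≠ 0 := Nat.cast_ne_zero.2 (NeZero.ne (n j))
    rw [← add_div, ← add_mul]
    have hval : (-a) j = -(a j) := rfl
    rw [hval, ZMod.neg_val]
    split_ifs with h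
    · simp [h]
    · have hle : (a j).val ≤ n j := le_of_lt (ZMod.val_lt (a j))
      have : ((n j - (a j).val : ℕ) : ℂ) + ((a j).val : ℂ) = (n j : ℂ) := by
        push_cast [hle]; ring
      rw [this]
      field_simp
  rw [key]
  have := Complex.exp_nat_mul (2 * π * Complex.I) (∑ j, if a j = 0 then 0 else (k j).val)
  rw [mul_comm (2 * (π:ℂ) * Complex.I), this, Complex.exp_two_pi_mul_I, one_pow]

lemma psi_conj (a k : ∀ j, ZMod (n j)) :
    (starRingEnd ℂ) (psi m n a k) = psi m n (-a) k := by
  have h1 : psi m n (-a) k = (psi m n a k)⁻¹ :=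
    eq_inv_of_mul_eq_one_left (psi_mul_neg m n a k)
  rw [h1, psi, ← Complex.exp_conj, ← Complex.exp_neg]
  congr 1
  have : (∑ j, ((a j).val * (k j).val : ℂ) / (n j : ℂ))
      = ((∑ j, ((a j).val * (k j).val : ℝ) / (n j : ℝ) : ℝ) : ℂ) := by
    push_cast; ring
  rw [this, show (2 * (π:ℂ) * Complex.I * ((∑ j, ((a j).val * (k j).val : ℝ) / (n j : ℝ) : ℝ) : ℂ))
      = ((2 * π * (∑ j, ((a j).val * (k j).val : ℝ) / (n j : ℝ)) : ℝ) : ℂ) * Complex.I by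
    push_cast; ring]
  rw [map_mul, Complex.conj_ofReal, Complex.conj_I]
  push_cast; ring

lemma ph_sum (nn : ℕ) [NeZero nn] (a : ZMod nn) :
    ∑ b : ZMod nn, Complex.exp (2 * π * Complex.I * ((a.val * b.val : ℂ) / (nn : ℂ)))
      = if a = 0 then (nn : ℂ) else 0 := by
  have hnn : nn ≠ 0 := NeZero.ne nn
  set ζ : ℂ := Complex.exp (2 * π * Complex.I / nn) with hζdef
  have hζ : IsPrimitiveRoot ζ nn := Complex.isPrimitiveRoot_exp nn hnn
  have hterm : ∀ b : ZMod nn,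
      Complex.exp (2 * π * Complex.I * ((a.val * b.val : ℂ) / (nn : ℂ)))
        = (ζ ^ a.val) ^ b.val := by
    intro b
    rw [← pow_mul, hζdef, ← Complex.exp_nat_mul]
    congr 1
    push_cast
    ring
  rw [Finset.sum_congr rfl fun b _ => hterm b]
  have hre : ∀ x : ℂ, ∑ b : ZMod nn, x ^ b.val = ∑ i ∈ Finset.range nn, x ^ i := by
    intro x
    obtain ⟨kk, rfl⟩ := Nat.exists_eq_succ_of_ne_zero hnn
    exact Fin.sum_univ_eq_sum_range (fun i => x ^ i) (kk + 1)
  split_ifs with h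
  · subst h
    simp [ZMod.val_zero, Finset.card_univ, ZMod.card]
  · have hav : a.val ≠ 0 := fun hh => h (by rwa [← ZMod.val_eq_zero])
    have hne : ζ ^ a.val ≠ 1 := by
      intro hh
      have := (hζ.pow_eq_one_iff_dvd a.val).1 hh
      exact hav (Nat.eq_zero_of_dvd_of_lt this (ZMod.val_lt a))
    rw [hre, geom_sum_eq hne]
    have hone : (ζ ^ a.val) ^ nn = 1 := by
      rw [← pow_mul, mul_comm, pow_mul, hζ.pow_eq_one, one_pow]
    rw [hone, sub_self, zero_div]

lemma psi_sum (a : ∀ j, ZMod (n j)) :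
    ∑ k, psi m n a k = if a = 0 then (Fintype.card (∀ j, ZMod (n j)) : ℂ) else 0 := by
  classical
  have hprod : ∀ k : ∀ j, ZMod (n j), psi m n a k
      = ∏ j, Complex.exp (2 * π * Complex.I * (((a j).val * (k j).val : ℂ) / (n j : ℂ))) := by
    intro k
    rw [psi, Finset.mul_sum, Complex.exp_sum]
  rw [Finset.sum_congr rfl fun k _ => hprod k]
  rw [← Fintype.piFinset_univ,
    ← Finset.prod_univ_sum (fun j => (Finset.univ : Finset (ZMod (n j))))
      (fun j b => Complex.exp (2 * π * Complex.I * (((a j).val * b.val : ℂ) / (n j : ℂ))))]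
  rw [Finset.prod_congr rfl fun j _ => ph_sum (n j) (a j)]
  by_cases ha : a = 0
  · subst ha
    simp [Fintype.card_pi, ZMod.card]
  · rw [if_neg ha]
    obtain ⟨j, hj⟩ := Function.ne_iff.1 ha
    exact Finset.prod_eq_zero (Finset.mem_univ j) (by simp only [Pi.zero_apply] at hj; simp [hj])

end Stmt9Aux

/-- For probability distributions `p, q` on `G = ℤ_{n₁} × ⋯ × ℤ_{n_m}` with Fourier
transforms `λ_a`, if `λ_a(q) = 0 ⇒ λ_a(p) = 0` and `|λ_a(p)|/|λ_a(q)|^r < 1` off the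
trivial character, then for all large `N` the inverse Fourier transform of
`λ_a(p)^N / λ_a(q)^{⌊rN⌋}` is a probability distribution. -/
theorem stmt9
    (m : ℕ) (n : Fin m → ℕ) [∀ j, NeZero (n j)]
    (p q : (∀ j, ZMod (n j)) → ℝ)
    (hp0 : ∀ k, 0 ≤ p k) (hp1 : ∑ k, p k = 1)
    (hq0 : ∀ k, 0 ≤ q k) (hq1 : ∑ k, q k = 1)
    (lam : (∀ j, ZMod (n j)) → ((∀ j, ZMod (n j)) → ℝ) → ℂ)
    (hlam : ∀ a f, lam a f = ∑ k, (f k : ℂ) *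
      Complex.exp (2 * π * Complex.I * ∑ j, ((a j).val * (k j).val : ℂ) / (n j : ℂ)))
    (r : ℝ) (hr : 0 < r)
    (h0 : ∀ a, lam a q = 0 → lam a p = 0)
    (hlt : ∀ a, a ≠ 0 → lam a q ≠ 0 → ‖lam a p‖ / ‖lam a q‖ ^ r < 1) :
    ∃ N₀ : ℕ, ∀ N ≥ N₀,
      (∀ k : (∀ j, ZMod (n j)),
        0 ≤ (1 / (Fintype.card (∀ j, ZMod (n j)) : ℂ)) *
          ∑ a : (∀ j, ZMod (n j)),
            (if lam a q = 0 then 0 else lam a p ^ N / lam a q ^ (⌊r * (N : ℝ)⌋₊)) *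
              Complex.exp (2 * π * Complex.I * ∑ j, ((a j).val * (k j).val : ℂ) / (n j : ℂ))) ∧
      (∑ k : (∀ j, ZMod (n j)),
        (1 / (Fintype.card (∀ j, ZMod (n j)) : ℂ)) *
          ∑ a : (∀ j, ZMod (n j)),
            (if lam a q = 0 then 0 else lam a p ^ N / lam a q ^ (⌊r * (N : ℝ)⌋₊)) *
              Complex.exp (2 * π * Complex.I * ∑ j, ((a j).val * (k j).val : ℂ) / (n j : ℂ))) = 1 := by
  classical
  have hpsi : ∀ a k : ∀ j, ZMod (n j),
      Complex.exp (2 * π * Complex.I * ∑ j, ((a j).val * (k j).val : ℂ) / (n j : ℂ))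
        = Stmt9Aux.psi m n a k := fun _ _ => rfl
  have hl : ∀ a f, lam a f = ∑ k, (f k : ℂ) * Stmt9Aux.psi m n a k := by
    intro a f; rw [hlam]; simp only [hpsi]
  have hlam0 : ∀ f : (∀ j, ZMod (n j)) → ℝ, (∑ k, f k = 1) → lam 0 f = 1 := by
    intro f hf
    rw [hl]
    simp only [Stmt9Aux.psi_zero, mul_one]
    rw [← Complex.ofReal_sum, hf, Complex.ofReal_one]
  have hnorm : ∀ (f : (∀ j, ZMod (n j)) → ℝ), (∀ k, 0 ≤ f k) → (∑ k, f k = 1) →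
      ∀ a, ‖lam a f‖ ≤ 1 := by
    intro f hf0 hf1 a
    rw [hl]
    calc ‖∑ k, (f k : ℂ) * Stmt9Aux.psi m n a k‖
        ≤ ∑ k, ‖(f k : ℂ) * Stmt9Aux.psi m n a k‖ := norm_sum_le _ _
      _ = ∑ k, f k := by
          refine Finset.sum_congr rfl fun k _ => ?_
          rw [norm_mul, Stmt9Aux.psi_norm, mul_one, Complex.norm_real,
            Real.norm_of_nonneg (hf0 k)]
      _ = 1 := hf1
  have hconj : ∀ (f : (∀ j, ZMod (n j)) → ℝ) a,
      (starRingEnd ℂ) (lam a f) = lam (-a) f := by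
    intro f a
    rw [hl, hl, map_sum]
    refine Finset.sum_congr rfl fun k _ => ?_
    rw [map_mul, Complex.conj_ofReal, Stmt9Aux.psi_conj]
  have hcard : ((Fintype.card (∀ j, ZMod (n j)) : ℂ)) ≠ 0 :=
    Nat.cast_ne_zero.2 Fintype.card_ne_zero
  set c : (∀ j, ZMod (n j)) → ℝ := fun a =>
    if lam a q = 0 then 0 else ‖lam a p‖ / ‖lam a q‖ ^ r with hc
  have hc0 : ∀ a, 0 ≤ c a := by
    intro a; rw [hc]; dsimp only; split_ifs with h
    · exact le_refl 0
    · positivity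
  have hc1 : ∀ a, a ≠ 0 → c a < 1 := by
    intro a ha; rw [hc]; dsimp only; split_ifs with h
    · exact zero_lt_one
    · exact hlt a ha h
  have htend : Filter.Tendsto
      (fun N => ∑ a ∈ Finset.univ.erase (0 : ∀ j, ZMod (n j)), c a ^ N)
      Filter.atTop (nhds 0) := by
    have h00 : (0:ℝ) = ∑ a ∈ Finset.univ.erase (0 : ∀ j, ZMod (n j)), (0:ℝ) := by simp
    rw [h00]
    refine tendsto_finset_sum _ fun a ha => ?_
    exact tendsto_pow_atTop_nhds_zero_of_lt_one (hc0 a) (hc1 a (Finset.ne_of_mem_erase ha))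
  obtain ⟨N₀, hN₀⟩ := Filter.eventually_atTop.1
    (htend.eventually_lt_const (by norm_num : (0:ℝ) < 1))
  refine ⟨N₀, fun N hN => ?_⟩
  set T : (∀ j, ZMod (n j)) → ℂ := fun a =>
    if lam a q = 0 then 0 else lam a p ^ N / lam a q ^ (⌊r * (N : ℝ)⌋₊) with hT
  have hTb : ∀ a, ‖T a‖ ≤ c a ^ N := by
    intro a; rw [hT, hc]; dsimp only
    split_ifs with h
    · simpa using pow_nonneg (le_refl (0:ℝ)) N
    · have hqn : 0 < ‖lam a q‖ := norm_pos_iff.2 h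
      have hq1' : ‖lam a q‖ ≤ 1 := hnorm q hq0 hq1 a
      have hfloor : ((⌊r * (N:ℝ)⌋₊ : ℕ) : ℝ) ≤ r * N := Nat.floor_le (by positivity)
      have h1 : ‖lam a q‖ ^ (r * (N:ℝ)) ≤ ‖lam a q‖ ^ ((⌊r * (N:ℝ)⌋₊ : ℕ) : ℝ) :=
        Real.rpow_le_rpow_of_exponent_ge hqn hq1' hfloor
      have h2 : (‖lam a p‖ / ‖lam a q‖ ^ r) ^ N = ‖lam a p‖ ^ N / ‖lam a q‖ ^ (r * (N:ℝ)) := by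
        rw [div_pow, ← Real.rpow_natCast (‖lam a q‖ ^ r) N, ← Real.rpow_mul hqn.le]
      rw [norm_div, norm_pow, norm_pow, h2,
        ← Real.rpow_natCast ‖lam a q‖ ⌊r * (N:ℝ)⌋₊]
      gcongr
  have hS1 : ∑ a ∈ Finset.univ.erase (0 : ∀ j, ZMod (n j)), ‖T a‖ < 1 :=
    lt_of_le_of_lt (Finset.sum_le_sum fun a _ => hTb a) (hN₀ N hN)
  have hp0' : lam 0 p = 1 := hlam0 p hp1
  have hq0' : lam 0 q = 1 := hlam0 q hq1
  have hT0 : T 0 = 1 := by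
    rw [hT]; dsimp only; rw [hp0', hq0', if_neg one_ne_zero, one_pow, one_pow, div_one]
  have hTs : ∀ a, (if lam a q = 0 then (0:ℂ) else lam a p ^ N / lam a q ^ (⌊r * (N : ℝ)⌋₊))
      = T a := fun a => rfl
  constructor
  · intro k
    simp only [hTs, hpsi]
    have hSnn : (0:ℂ) ≤ ∑ a, T a * Stmt9Aux.psi m n a k := by
      set S := ∑ a, T a * Stmt9Aux.psi m n a k with hS
      have hTconj : ∀ a, (starRingEnd ℂ) (T a) = T (-a) := by
        intro a
        rw [hT]; dsimp only
        have hiff : lam a q = 0 ↔ lam (-a) q = 0 := by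
          constructor
          · intro hh; rw [← hconj q a, hh, map_zero]
          · intro hh
            have : (starRingEnd ℂ) (lam a q) = 0 := by rw [hconj q a]; exact hh
            simpa using this
        by_cases hcase : lam a q = 0
        · rw [if_pos hcase, if_pos (hiff.1 hcase), map_zero]
        · rw [if_neg hcase, if_neg (fun hh => hcase (hiff.2 hh)),
            map_div₀, map_pow, map_pow, hconj p a, hconj q a]
      have him : (starRingEnd ℂ) S = S := by
        rw [hS, map_sum]
        refine Fintype.sum_equiv (Equiv.neg _) _ _ fun a => ?_
        rw [map_mul, Stmt9Aux.psi_conj, hTconj]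
        rfl
      have himS : S.im = 0 := Complex.conj_eq_iff_im.1 him
      have hsplit : S = T 0 * Stmt9Aux.psi m n 0 k
          + ∑ a ∈ Finset.univ.erase (0 : ∀ j, ZMod (n j)), T a * Stmt9Aux.psi m n a k :=
        (Finset.add_sum_erase _ _ (Finset.mem_univ 0)).symm
      have hEnorm : ‖∑ a ∈ Finset.univ.erase (0 : ∀ j, ZMod (n j)),
          T a * Stmt9Aux.psi m n a k‖ < 1 := by
        refine lt_of_le_of_lt (le_trans (norm_sum_le _ _) (le_of_eq ?_)) hS1
        refine Finset.sum_congr rfl fun a _ => ?_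
        rw [norm_mul, Stmt9Aux.psi_norm, mul_one]
      have hre : 0 ≤ S.re := by
        rw [hsplit, hT0, Stmt9Aux.psi_zero, mul_one, Complex.add_re, Complex.one_re]
        set E := ∑ a ∈ Finset.univ.erase (0 : ∀ j, ZMod (n j)),
          T a * Stmt9Aux.psi m n a k with hE
        have h1 : |E.re| ≤ ‖E‖ := by
          exact Complex.abs_re_le_norm E
        have h2 := neg_abs_le E.re
        linarith
      rw [Complex.le_def]
      refine ⟨by simpa using hre, by simpa using himS.symm⟩
    have hcnn : (0:ℂ) ≤ 1 / (Fintype.card (∀ j, ZMod (n j)) : ℂ) := by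
      rw [show (1 / ((Fintype.card (∀ j, ZMod (n j)) : ℂ)))
          = (((1 / (Fintype.card (∀ j, ZMod (n j)) : ℝ)) : ℝ) : ℂ) by push_cast; ring]
      exact Complex.zero_le_real.2 (by positivity)
    exact mul_nonneg hcnn hSnn
  · simp only [hTs, hpsi]
    rw [← Finset.mul_sum, Finset.sum_comm]
    have h1 : ∑ a, ∑ k, T a * Stmt9Aux.psi m n a k
        = ∑ a : (∀ j, ZMod (n j)), T a * ∑ k, Stmt9Aux.psi m n a k := by
      refine Finset.sum_congr rfl fun a _ => (Finset.mul_sum _ _ _).symm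
    rw [h1]
    rw [Finset.sum_congr rfl fun a _ => by rw [Stmt9Aux.psi_sum]]
    rw [Finset.sum_eq_single (0 : ∀ j, ZMod (n j))
      (fun a _ ha => by rw [if_neg ha, mul_zero])
      (fun h => absurd (Finset.mem_univ _) h)]
    rw [if_pos rfl, hT0, one_mul, one_div, inv_mul_cancel₀ hcard]
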